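/- Let Γ be a group with automorphisms α₀, α₁, and let π : V → Aut(LΓ) be the twisted Jones action defined by π_v(a)(vx) = τ_{v,x}(a(x)), where τ_{v,x} = α_{v(I)}^{-1} ∘ α_I for a standard dyadic interval I containing x adapted to v. Then for every finite union of standard dyadic intervals I, the set of a ∈ LΓ commuting (in LΓ ⋊ V) with every element of Fix_V(I) = {v ∈ V : v(x)=x for all x ∈ I} equals L_I Γ · D_{I^c}(Γ^α), i.e., the set of locally constant maps supported in I multiplied by constant maps on the complement of I valued in Γ^α := {g ∈ Γ : g = α₀(g) = α₁(g)}. -/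

import Mathlib

/-! Basic setup: the Cantor space, prefix replacement, Thompson's group `V`,
slopes, dyadic rationals, standard dyadic partitions, locally constant maps,
and the permutation model of the twisted fraction groups `LΓ ⋊ V`. -/

abbrev Cantor : Type := ℕ → Bool

/-- Concatenation of a finite word with an infinite sequence. -/
def cat (w : List Bool) (x : Cantor) : Cantor :=
  fun n => if n < w.length then w.getD n false else x (n - w.length)

/-- The standard dyadic interval (cylinder) associated to a finite word. -/
def cyl (w : List Bool) : Set Cantor := {x | ∃ y : Cantor, x = cat w y}

/-- Membership in Thompson's group `V`: a homeomorphism of the Cantor space which is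
everywhere locally given by prefix replacement. -/
def memV (v : Cantor ≃ₜ Cantor) : Prop :=
  ∀ x : Cantor, ∃ (m w : List Bool) (y : Cantor),
    x = cat m y ∧ ∀ z : Cantor, v (cat m z) = cat w z

/-- `HasLogSlope v x k` : `k = log₂ v'(x)`, base-2 logarithm of the slope of `v` at `x`. -/
def HasLogSlope (v : Cantor ≃ₜ Cantor) (x : Cantor) (k : ℤ) : Prop :=
  ∃ (m w : List Bool) (y : Cantor),
    x = cat m y ∧ (∀ z : Cantor, v (cat m z) = cat w z) ∧
      k = (m.length : ℤ) - (w.length : ℤ)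

open Classical in
noncomputable def logSlope (v : Cantor ≃ₜ Cantor) (x : Cantor) : ℤ :=
  if h : ∃ k : ℤ, HasLogSlope v x k then h.choose else 0

/-- The eventually periodic sequence `c∞ = c·c·c⋯`. -/
def tailSeq (c : List Bool) : Cantor := fun n => c.getD (n % c.length) false

/-- `x` lies in the tail equivalence class of the word `c`, i.e. `x = y·c∞`. -/
def InTailClass (x : Cantor) (c : List Bool) : Prop :=
  ∃ y : List Bool, x = cat y (tailSeq c)

/-- `x` is eventually periodic (a rational point of the Cantor space). -/
def EvPeriodic (x : Cantor) : Prop :=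
  ∃ (y c : List Bool), c ≠ [] ∧ x = cat y (tailSeq c)

/-- A prime word: a nonempty word which is not a proper power of a word. -/
def PrimeWord (c : List Bool) : Prop :=
  c ≠ [] ∧ ∀ (d : List Bool) (k : ℕ), 2 ≤ k → c ≠ (List.replicate k d).flatten

/-- `conjH φ v = φ ∘ v ∘ φ⁻¹`. -/
def conjH (φ v : Cantor ≃ₜ Cantor) : Cantor ≃ₜ Cantor := φ.symm.trans (v.trans φ)

/-- `φ` normalizes Thompson's group `V` inside `Homeo(𝔠)` : `φ V φ⁻¹ = V`. -/
def NormalizesV (φ : Cantor ≃ₜ Cantor) : Prop :=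
  (conjH φ) '' {v | memV v} = {v | memV v}

/-- The copy of the dyadic rationals `Q₂ ⊂ 𝔠` : finitely supported sequences. -/
def InQ2 (x : Cantor) : Prop := ∃ n : ℕ, ∀ m, n ≤ m → x m = false

def zeroSeq : Cantor := fun _ => false

/-- A standard dyadic partition of the Cantor space. -/
def IsSDP (P : Finset (List Bool)) : Prop :=
  ∀ x : Cantor, ∃! w : List Bool, w ∈ P ∧ x ∈ cyl w

/-- Locally constant map: constant on each piece of some standard dyadic partition. -/
def IsLC {Γ : Type*} (f : Cantor → Γ) : Prop :=
  ∃ P : Finset (List Bool), IsSDP P ∧ ∀ w ∈ P, ∀ y z : Cantor, f (cat w y) = f (cat w z)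

/-- `h` agrees on `Q₂` with (the restriction of) a locally constant map. -/
def AgreesOnQ2WithLC {Γ : Type*} (h : Cantor → Γ) : Prop :=
  ∃ b : Cantor → Γ, IsLC b ∧ ∀ x, InQ2 x → h x = b x

section GroupPart
variable {Γ : Type*} [Group Γ]

/-- `alphaWord α₀ α₁ (m₁⋯m_k) = α_{m_k} ∘ ⋯ ∘ α_{m₁}`. -/
def alphaWord (α₀ α₁ : Γ ≃* Γ) (m : List Bool) : Γ ≃* Γ :=
  m.foldl (fun acc b => acc.trans (if b then α₁ else α₀)) (MulEquiv.refl Γ)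

open Classical in
/-- The twisting automorphism `τ_{v,x} = α_{v(I)}⁻¹ ∘ α_I` for a standard dyadic
interval `I` containing `x` and adapted to `v`. -/
noncomputable def tauEquiv (α₀ α₁ : Γ ≃* Γ) (v : Cantor ≃ₜ Cantor) (x : Cantor) : Γ ≃* Γ :=
  if h : ∃ p : List Bool × List Bool, x ∈ cyl p.1 ∧ ∀ z : Cantor, v (cat p.1 z) = cat p.2 z
  then (alphaWord α₀ α₁ h.choose.1).trans (alphaWord α₀ α₁ h.choose.2).symm
  else MulEquiv.refl Γ

/-- The element `a·v` of the twisted `LΓ ⋊ V`, realized as the permutation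
`(x,g) ↦ (v x, a(v x) · τ_{v,x}(g))` of `𝔠 × Γ`. -/
noncomputable def permOf (α₀ α₁ : Γ ≃* Γ) (a : Cantor → Γ) (v : Cantor ≃ₜ Cantor) :
    Equiv.Perm (Cantor × Γ) where
  toFun p := (v p.1, a (v p.1) * tauEquiv α₀ α₁ v p.1 p.2)
  invFun p := (v.symm p.1, (tauEquiv α₀ α₁ v (v.symm p.1)).symm ((a p.1)⁻¹ * p.2))
  left_inv := by rintro ⟨x, g⟩; simp
  right_inv := by rintro ⟨x, g⟩; simp

end GroupPart

/-- The twisted fraction group `G = LΓ ⋊ V` of the triple `(Γ, α₀, α₁)`,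
as a group of permutations of `𝔠 × Γ`. -/
noncomputable def Gsub (Γ : Type*) [Group Γ] (α₀ α₁ : Γ ≃* Γ) :
    Subgroup (Equiv.Perm (Cantor × Γ)) :=
  Subgroup.closure {p | ∃ a v, IsLC a ∧ memV v ∧ p = permOf α₀ α₁ a v}

/-- The untwisted case `α₀ = α₁ = id`. -/
noncomputable def permOfU {Γ : Type*} [Group Γ] (a : Cantor → Γ) (v : Cantor ≃ₜ Cantor) :=
  permOf (MulEquiv.refl Γ) (MulEquiv.refl Γ) a v

/-- The untwisted fraction group `G = LΓ ⋊ V`. -/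
noncomputable def GsubU (Γ : Type*) [Group Γ] := Gsub Γ (MulEquiv.refl Γ) (MulEquiv.refl Γ)

/-- `f ∈ N_{K̄}(G)` : the element `f` of `K̄ = ∏_{Q₂}Γ` normalizes `G = LΓ ⋊ V`
(untwisted case), i.e. `f·a·(f^v)⁻¹` and `f⁻¹·a·f^v` are locally constant on `Q₂`. -/
def InNormKbar {Γ : Type*} [Group Γ] (f : Cantor → Γ) : Prop :=
  ∀ (a : Cantor → Γ) (v : Cantor ≃ₜ Cantor), IsLC a → memV v →
    AgreesOnQ2WithLC (fun x => f x * a x * (f (v.symm x))⁻¹) ∧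
    AgreesOnQ2WithLC (fun x => (f x)⁻¹ * a x * f (v.symm x))

/-! ### Auxiliary development for Statement 4 -/

namespace Statement4Aux

/-- `x` begins with the word `m`. -/
def hasPrefix (m : List Bool) (x : Cantor) : Prop :=
  ∀ i, i < m.length → x i = m.getD i false

/-- Drop the first `k` letters of `x`. -/
def dropC (k : ℕ) (x : Cantor) : Cantor := fun n => x (n + k)

lemma cat_apply_lt (m : List Bool) (z : Cantor) {n : ℕ} (h : n < m.length) :
    cat m z n = m.getD n false := if_pos h

lemma cat_apply_ge (m : List Bool) (z : Cantor) {n : ℕ} (h : m.length ≤ n) :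
    cat m z n = z (n - m.length) := if_neg (by omega)

lemma dropC_cat (m : List Bool) (z : Cantor) : dropC m.length (cat m z) = z := by
  funext n
  simp only [dropC]
  rw [cat_apply_ge m z (by omega), Nat.add_sub_cancel]

lemma hasPrefix_cat (m : List Bool) (z : Cantor) : hasPrefix m (cat m z) :=
  fun _ hi => cat_apply_lt m z hi

lemma cat_dropC {m : List Bool} {x : Cantor} (h : hasPrefix m x) :
    cat m (dropC m.length x) = x := by
  funext n
  by_cases hn : n < m.length
  · rw [cat_apply_lt m _ hn, h n hn]
  · rw [cat_apply_ge m _ (by omega)]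
    simp only [dropC]
    congr 1
    omega

lemma mem_cyl_iff {m : List Bool} {x : Cantor} : x ∈ cyl m ↔ hasPrefix m x := by
  constructor
  · rintro ⟨y, rfl⟩
    exact hasPrefix_cat m y
  · intro h
    exact ⟨dropC m.length x, (cat_dropC h).symm⟩

lemma cat_cat (m s : List Bool) (z : Cantor) : cat m (cat s z) = cat (m ++ s) z := by
  funext n
  by_cases h1 : n < m.length
  · rw [cat_apply_lt _ _ h1, cat_apply_lt _ _ (by simp; omega),
      List.getD_append _ _ _ _ h1]
  · rw [cat_apply_ge _ _ (by omega)]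
    by_cases h2 : n - m.length < s.length
    · rw [cat_apply_lt _ _ h2, cat_apply_lt _ _ (by simp; omega),
        List.getD_append_right _ _ _ _ (by omega)]
    · rw [cat_apply_ge _ _ (by omega), cat_apply_ge _ _ (by simp; omega)]
      congr 1
      simp
      omega

lemma cat_inj {m w : List Bool} (h : ∀ z, cat m z = cat w z) : m = w := by
  have hlen : m.length = w.length := by
    by_contra hne
    rcases Nat.lt_or_ge m.length w.length with hlt | hge
    · have h2 := congrFun (h (fun _ => !w.getD m.length false)) m.length
      rw [cat_apply_ge _ _ (le_refl _), cat_apply_lt _ _ hlt] at h2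
      simp at h2
    · have hlt : w.length < m.length := by omega
      have h2 := congrFun (h (fun _ => !m.getD w.length false)) w.length
      rw [cat_apply_lt _ _ hlt, cat_apply_ge _ _ (le_refl _)] at h2
      simp at h2
  apply List.ext_getElem hlen
  intro i h1 h2
  have h3 := congrFun (h zeroSeq) i
  rw [cat_apply_lt _ _ h1, cat_apply_lt _ _ h2, List.getD_eq_getElem _ _ h1,
    List.getD_eq_getElem _ _ h2] at h3
  exact h3

lemma hasPrefix_trans {m t : List Bool} {y u : Cantor} (h1 : hasPrefix m y)
    (h2 : hasPrefix t y) (hle : m.length ≤ t.length) (h3 : hasPrefix t u) :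
    hasPrefix m u := by
  intro i hi
  rw [h3 i (by omega), ← h2 i (by omega), h1 i hi]

lemma eq_append_drop {m t : List Bool} {x : Cantor} (h1 : hasPrefix m x)
    (h2 : hasPrefix t x) (hle : m.length ≤ t.length) :
    t = m ++ t.drop m.length := by
  conv_lhs => rw [← List.take_append_drop m.length t]
  congr 1
  apply List.ext_getElem (by simp [hle])
  intro i hi1 hi2
  have hit : i < t.length := by omega
  rw [List.getElem_take, ← List.getD_eq_getElem t false hit, ← h2 i hit, h1 i hi2,
    List.getD_eq_getElem m false hi2]

/-- The length-`n` prefix of `x`, as a word. -/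
def pref (x : Cantor) (n : ℕ) : List Bool := List.ofFn fun i : Fin n => x i

@[simp] lemma length_pref (x : Cantor) (n : ℕ) : (pref x n).length = n :=
  List.length_ofFn

lemma hasPrefix_pref (x : Cantor) (n : ℕ) : hasPrefix (pref x n) x := by
  intro i hi
  rw [length_pref] at hi
  rw [List.getD_eq_getElem _ false (by simpa using hi)]
  simp [pref]

end Statement4Aux
namespace Statement4Aux

section Alpha
variable {Γ : Type*} [Group Γ] (α₀ α₁ : Γ ≃* Γ)

lemma foldl_alpha_apply (s : List Bool) (e : Γ ≃* Γ) (g : Γ) :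
    (List.foldl (fun acc b => acc.trans (if b then α₁ else α₀)) e s) g
      = alphaWord α₀ α₁ s (e g) := by
  induction s generalizing e g with
  | nil => rfl
  | cons b s ih =>
    show (List.foldl _ (e.trans (if b then α₁ else α₀)) s) g = _
    rw [ih]
    show _ = (List.foldl _ ((MulEquiv.refl Γ).trans (if b then α₁ else α₀)) s) (e g)
    rw [ih]
    rfl

lemma alphaWord_apply_append (m s : List Bool) (g : Γ) :
    alphaWord α₀ α₁ (m ++ s) g = alphaWord α₀ α₁ s (alphaWord α₀ α₁ m g) := by
  have h : alphaWord α₀ α₁ (m ++ s)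
      = List.foldl (fun acc b => acc.trans (if b then α₁ else α₀)) (alphaWord α₀ α₁ m) s := by
    rw [alphaWord, alphaWord, List.foldl_append]
  rw [h, foldl_alpha_apply]

@[simp] lemma alphaWord_nil (g : Γ) : alphaWord α₀ α₁ [] g = g := rfl

@[simp] lemma alphaWord_single_true (g : Γ) : alphaWord α₀ α₁ [true] g = α₁ g := rfl

@[simp] lemma alphaWord_single_false (g : Γ) : alphaWord α₀ α₁ [false] g = α₀ g := rfl

@[simp] lemma alphaWord_pair_false (g : Γ) :
    alphaWord α₀ α₁ [false, false] g = α₀ (α₀ g) := rfl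

lemma alphaWord_fix {g : Γ} (h0 : α₀ g = g) (h1 : α₁ g = g) (w : List Bool) :
    alphaWord α₀ α₁ w g = g := by
  induction w with
  | nil => rfl
  | cons b s ih =>
    have h : alphaWord α₀ α₁ (b :: s) g = alphaWord α₀ α₁ s ((if b then α₁ else α₀) g) := by
      rw [alphaWord, List.foldl_cons, foldl_alpha_apply]
      rfl
    rw [h]
    cases b <;> simp [h0, h1, ih]

lemma alphaWord_symm_fix {g : Γ} (h0 : α₀ g = g) (h1 : α₁ g = g) (w : List Bool) :
    (alphaWord α₀ α₁ w).symm g = g := by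
  rw [MulEquiv.symm_apply_eq, alphaWord_fix α₀ α₁ h0 h1 w]

lemma tau_core {v : Cantor ≃ₜ Cantor} {x : Cantor} {m₁ w₁ m₂ w₂ : List Bool}
    (h1 : hasPrefix m₁ x) (hv1 : ∀ z, v (cat m₁ z) = cat w₁ z)
    (h2 : hasPrefix m₂ x) (hv2 : ∀ z, v (cat m₂ z) = cat w₂ z)
    (hle : m₁.length ≤ m₂.length) (g : Γ) :
    (alphaWord α₀ α₁ w₂).symm (alphaWord α₀ α₁ m₂ g)
      = (alphaWord α₀ α₁ w₁).symm (alphaWord α₀ α₁ m₁ g) := by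
  obtain ⟨s, rfl⟩ : ∃ s, m₂ = m₁ ++ s := ⟨_, eq_append_drop h1 h2 hle⟩
  have hw2 : w₂ = w₁ ++ s := by
    apply cat_inj
    intro z
    rw [← hv2 z, ← cat_cat, hv1, cat_cat]
  subst hw2
  rw [alphaWord_apply_append α₀ α₁ m₁ s g, MulEquiv.symm_apply_eq,
    alphaWord_apply_append α₀ α₁ w₁ s, MulEquiv.apply_symm_apply]

lemma tau_welldef {v : Cantor ≃ₜ Cantor} {x : Cantor} {m₁ w₁ m₂ w₂ : List Bool}
    (h1 : hasPrefix m₁ x) (hv1 : ∀ z, v (cat m₁ z) = cat w₁ z)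
    (h2 : hasPrefix m₂ x) (hv2 : ∀ z, v (cat m₂ z) = cat w₂ z) (g : Γ) :
    (alphaWord α₀ α₁ w₁).symm (alphaWord α₀ α₁ m₁ g)
      = (alphaWord α₀ α₁ w₂).symm (alphaWord α₀ α₁ m₂ g) := by
  rcases le_total m₁.length m₂.length with h | h
  · exact (tau_core α₀ α₁ h1 hv1 h2 hv2 h g).symm
  · exact tau_core α₀ α₁ h2 hv2 h1 hv1 h g

lemma tau_spec {v : Cantor ≃ₜ Cantor} {x : Cantor} {m w : List Bool}
    (hm : hasPrefix m x) (hv : ∀ z, v (cat m z) = cat w z) (g : Γ) :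
    tauEquiv α₀ α₁ v x g = (alphaWord α₀ α₁ w).symm (alphaWord α₀ α₁ m g) := by
  have hex : ∃ p : List Bool × List Bool, x ∈ cyl p.1 ∧ ∀ z, v (cat p.1 z) = cat p.2 z :=
    ⟨(m, w), mem_cyl_iff.mpr hm, hv⟩
  rw [tauEquiv, dif_pos hex, MulEquiv.trans_apply]
  exact tau_welldef α₀ α₁ (mem_cyl_iff.mp hex.choose_spec.1) hex.choose_spec.2 hm hv g

lemma tau_refl (x : Cantor) (g : Γ) :
    tauEquiv α₀ α₁ (Homeomorph.refl Cantor) x g = g := by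
  have h := tau_spec α₀ α₁ (m := []) (w := []) (x := x) (v := Homeomorph.refl Cantor)
    (fun i hi => by simp at hi) (fun z => rfl) g
  rw [h, MulEquiv.symm_apply_apply]

end Alpha

end Statement4Aux
namespace Statement4Aux

lemma isOpen_cyl (m : List Bool) : IsOpen (cyl m) := by
  have h : cyl m = ⋂ i : Fin m.length, {x : Cantor | x i = m.getD i false} := by
    ext x
    simp only [Set.mem_iInter, Set.mem_setOf_eq, mem_cyl_iff]
    exact ⟨fun h i => h i i.2, fun h i hi => h ⟨i, hi⟩⟩
  rw [h]
  refine isOpen_iInter_of_finite fun i => ?_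
  have h2 : {x : Cantor | x i = m.getD i false}
      = (fun x : Cantor => x (i : ℕ)) ⁻¹' {m.getD i false} := rfl
  rw [h2]
  exact (isOpen_discrete _).preimage (continuous_apply (i : ℕ))

lemma continuous_of_locPR {g : Cantor → Cantor}
    (hg : ∀ x : Cantor, ∃ m w : List Bool, hasPrefix m x ∧ ∀ z, g (cat m z) = cat w z) :
    Continuous g := by
  rw [continuous_iff_continuousAt]
  intro x
  obtain ⟨m, w, hx, hgm⟩ := hg x
  have hcont : Continuous fun y : Cantor => cat w (dropC m.length y) := by
    apply continuous_pi
    intro n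
    by_cases hn : n < w.length
    · have h : (fun y : Cantor => cat w (dropC m.length y) n) = fun _ => w.getD n false := by
        funext y
        exact cat_apply_lt _ _ hn
      rw [h]
      exact continuous_const
    · have h : (fun y : Cantor => cat w (dropC m.length y) n)
          = fun y : Cantor => y (n - w.length + m.length) := by
        funext y
        rw [cat_apply_ge _ _ (by omega)]
        rfl
      rw [h]
      exact continuous_apply _
  apply hcont.continuousAt.congr
  have hopen : cyl m ∈ nhds x := (isOpen_cyl m).mem_nhds (mem_cyl_iff.mpr hx)
  filter_upwards [hopen] with y hy
  conv_rhs => rw [← cat_dropC (mem_cyl_iff.mp hy)]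
  rw [hgm]

open Classical in
/-- The swap of the (disjoint) cylinders given by `m` and `w`. -/
noncomputable def swapFun (m w : List Bool) : Cantor → Cantor := fun x =>
  if hasPrefix m x then cat w (dropC m.length x)
  else if hasPrefix w x then cat m (dropC w.length x)
  else x

/-- Disjointness of two cylinders. -/
def Disj (m w : List Bool) : Prop := ∀ x : Cantor, hasPrefix m x → hasPrefix w x → False

lemma swapFun_left (m w : List Bool) (z : Cantor) : swapFun m w (cat m z) = cat w z := by
  rw [swapFun, if_pos (hasPrefix_cat m z), dropC_cat]

lemma swapFun_right {m w : List Bool} (hd : Disj m w) (z : Cantor) :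
    swapFun m w (cat w z) = cat m z := by
  rw [swapFun, if_neg (fun h => hd _ h (hasPrefix_cat w z)), if_pos (hasPrefix_cat w z),
    dropC_cat]

lemma swapFun_id {m w : List Bool} {x : Cantor} (h1 : ¬ hasPrefix m x)
    (h2 : ¬ hasPrefix w x) : swapFun m w x = x := by
  rw [swapFun, if_neg h1, if_neg h2]

lemma swapFun_invol {m w : List Bool} (hd : Disj m w) :
    Function.Involutive (swapFun m w) := by
  intro x
  by_cases h1 : hasPrefix m x
  · have e1 : swapFun m w x = cat w (dropC m.length x) := by
      rw [swapFun, if_pos h1]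
    rw [e1, swapFun_right hd, cat_dropC h1]
  · by_cases h2 : hasPrefix w x
    · have e1 : swapFun m w x = cat m (dropC w.length x) := by
        rw [swapFun, if_neg h1, if_pos h2]
      rw [e1, swapFun_left, cat_dropC h2]
    · rw [swapFun_id h1 h2, swapFun_id h1 h2]

lemma swapFun_locPR {m w : List Bool} (hd : Disj m w) :
    ∀ x : Cantor, ∃ m' w' : List Bool, hasPrefix m' x ∧
      ∀ z, swapFun m w (cat m' z) = cat w' z := by
  intro x
  by_cases h1 : hasPrefix m x
  · exact ⟨m, w, h1, fun z => swapFun_left m w z⟩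
  by_cases h2 : hasPrefix w x
  · exact ⟨w, m, h2, fun z => swapFun_right hd z⟩
  refine ⟨pref x (max m.length w.length), pref x (max m.length w.length),
    hasPrefix_pref _ _, fun z => ?_⟩
  apply swapFun_id
  · intro hm
    exact h1 (hasPrefix_trans hm (hasPrefix_cat _ z)
      (by rw [length_pref]; exact le_max_left _ _) (hasPrefix_pref x _))
  · intro hw
    exact h2 (hasPrefix_trans hw (hasPrefix_cat _ z)
      (by rw [length_pref]; exact le_max_right _ _) (hasPrefix_pref x _))

/-- The swap of two disjoint cylinders, as a homeomorphism of the Cantor space. -/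
noncomputable def swapHomeo (m w : List Bool) (hd : Disj m w) : Cantor ≃ₜ Cantor where
  toEquiv := Function.Involutive.toPerm _ (swapFun_invol hd)
  continuous_toFun := continuous_of_locPR (swapFun_locPR hd)
  continuous_invFun := continuous_of_locPR (swapFun_locPR hd)

lemma swapHomeo_apply (m w : List Bool) (hd : Disj m w) (x : Cantor) :
    swapHomeo m w hd x = swapFun m w x := rfl

lemma memV_swap {m w : List Bool} (hd : Disj m w) : memV (swapHomeo m w hd) := by
  intro x
  obtain ⟨m', w', h1, h2⟩ := swapFun_locPR hd x
  exact ⟨m', w', dropC m'.length x, (cat_dropC h1).symm, fun z => h2 z⟩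

section CommuteIff
variable {Γ : Type*} [Group Γ] (α₀ α₁ : Γ ≃* Γ)

lemma permOf_apply (a : Cantor → Γ) (u : Cantor ≃ₜ Cantor) (p : Cantor × Γ) :
    (permOf α₀ α₁ a u) p = (u p.1, a (u p.1) * tauEquiv α₀ α₁ u p.1 p.2) := rfl

lemma commute_iff (a : Cantor → Γ) (v : Cantor ≃ₜ Cantor) :
    Commute (permOf α₀ α₁ a (Homeomorph.refl Cantor)) (permOf α₀ α₁ (fun _ => (1 : Γ)) v)
      ↔ ∀ x : Cantor, a (v x) = tauEquiv α₀ α₁ v x (a x) := by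
  rw [commute_iff_eq, Equiv.ext_iff]
  constructor
  · intro h x
    have h2 := h ((x, 1) : Cantor × Γ)
    simp only [Equiv.Perm.mul_apply, permOf_apply, tau_refl, Homeomorph.refl_apply,
      id_eq, map_one, mul_one, one_mul] at h2
    exact congrArg Prod.snd h2
  · intro h p
    obtain ⟨x, g⟩ := p
    simp only [Equiv.Perm.mul_apply, permOf_apply, tau_refl, Homeomorph.refl_apply,
      id_eq, map_mul, one_mul]
    rw [h x]

end CommuteIff

end Statement4Aux
open Statement4Aux

/-- In the twisted fraction group `LΓ ⋊ V` of `(Γ, α₀, α₁)` (with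
`α₀, α₁` automorphisms), for every finite union `I` of standard dyadic intervals, the set
of `a ∈ LΓ` commuting with every element of `Fix_V(I)` equals `L_I Γ · D_{I^c}(Γ^α)`,
i.e. the maps in `LΓ` which are constant on the complement of `I` with value fixed by
both `α₀` and `α₁`. -/
theorem centralizer_of_fix (Γ : Type*) [Group Γ] (α₀ α₁ : Γ ≃* Γ)
    (P : Finset (List Bool)) :
    {a : Cantor → Γ | IsLC a ∧ ∀ v : Cantor ≃ₜ Cantor, memV v →
        (∀ x ∈ ⋃ w ∈ P, cyl w, v x = x) →
        Commute (permOf α₀ α₁ a (Homeomorph.refl Cantor))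
          (permOf α₀ α₁ (fun _ => (1 : Γ)) v)} =
    {a : Cantor → Γ | IsLC a ∧ ∃ g : Γ, α₀ g = g ∧ α₁ g = g ∧
        ∀ x, x ∉ (⋃ w ∈ P, cyl w) → a x = g} := by
  classical
  ext a
  simp only [Set.mem_setOf_eq]
  constructor
  · -- forward direction
    rintro ⟨hLC, hcomm⟩
    refine ⟨hLC, ?_⟩
    have hrel : ∀ v : Cantor ≃ₜ Cantor, memV v → (∀ x ∈ ⋃ w ∈ P, cyl w, v x = x) →
        ∀ x, a (v x) = tauEquiv α₀ α₁ v x (a x) := fun v h1 h2 =>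
      (commute_iff α₀ α₁ a v).mp (hcomm v h1 h2)
    by_cases hall : ∀ x : Cantor, x ∈ ⋃ w ∈ P, cyl w
    · exact ⟨1, map_one _, map_one _, fun x hx => absurd (hall x) hx⟩
    push_neg at hall
    obtain ⟨x₀, hx₀⟩ := hall
    obtain ⟨Q, hQ, hQconst⟩ := hLC
    -- key : long prefixes give cylinders avoiding `U` on which `a` is constant
    have key : ∀ x : Cantor, x ∉ (⋃ w ∈ P, cyl w) → ∀ n₀ : ℕ, ∃ u : List Bool,
        n₀ ≤ u.length ∧ hasPrefix u x ∧
        (∀ y, hasPrefix u y → y ∉ (⋃ w ∈ P, cyl w)) ∧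
        (∀ y, hasPrefix u y → a y = a x) := by
      intro x hx n₀
      obtain ⟨q, ⟨hqQ, hqx⟩, -⟩ := hQ x
      set N := max n₀ (max (P.sup List.length) q.length) with hN
      have hn1 : n₀ ≤ N := le_max_left _ _
      have hn2 : ∀ w ∈ P, w.length ≤ N := fun w hw =>
        le_trans (Finset.le_sup hw) (le_trans (le_max_left _ _) (le_max_right _ _))
      have hn3 : q.length ≤ N := le_trans (le_max_right _ _) (le_max_right _ _)
      refine ⟨pref x N, by rw [length_pref]; exact hn1, hasPrefix_pref x N, ?_, ?_⟩
      · intro y hy hyU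
        obtain ⟨w, hwP, hwy⟩ := Set.mem_iUnion₂.mp hyU
        apply hx
        refine Set.mem_iUnion₂.mpr ⟨w, hwP, mem_cyl_iff.mpr ?_⟩
        exact hasPrefix_trans (mem_cyl_iff.mp hwy) hy
          (by rw [length_pref]; exact hn2 w hwP) (hasPrefix_pref x N)
      · intro y hy
        have hqx' : hasPrefix q x := mem_cyl_iff.mp hqx
        have hqy : hasPrefix q y := hasPrefix_trans hqx' (hasPrefix_pref x N)
          (by rw [length_pref]; exact hn3) hy
        have h := hQconst q hqQ (dropC q.length y) (dropC q.length x)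
        rw [cat_dropC hqy, cat_dropC hqx'] at h
        exact h
    obtain ⟨u, -, hux₀, huU, huconst⟩ := key x₀ hx₀ 0
    -- auxiliary prefix facts
    have happ : ∀ (s : List Bool) (y : Cantor), hasPrefix (u ++ s) y → hasPrefix u y := by
      intro s y h i hi
      rw [h i (by simp; omega), List.getD_append _ _ _ _ hi]
    have hgetD : ∀ (b : Bool) (s : List Bool), (u ++ (b :: s)).getD u.length false = b := by
      intro b s
      rw [List.getD_append_right _ _ _ _ (le_refl _), Nat.sub_self]
      rfl
    have hd1 : Disj (u ++ [false]) (u ++ [true]) := by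
      intro y hy1 hy2
      have e1 := hy1 u.length (by simp)
      have e2 := hy2 u.length (by simp)
      rw [hgetD false []] at e1
      rw [hgetD true []] at e2
      rw [e1] at e2
      simp at e2
    have hd2 : Disj (u ++ [false, false]) (u ++ [true]) := by
      intro y hy1 hy2
      have e1 := hy1 u.length (by simp)
      have e2 := hy2 u.length (by simp)
      rw [hgetD false [false]] at e1
      rw [hgetD true []] at e2
      rw [e1] at e2
      simp at e2
    -- the basic relation coming from swapping two cylinders avoiding U
    have relswap : ∀ (m₁ m₂ : List Bool) (hd : Disj m₁ m₂),
        (∀ y, y ∈ (⋃ w ∈ P, cyl w) → ¬ hasPrefix m₁ y) →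
        (∀ y, y ∈ (⋃ w ∈ P, cyl w) → ¬ hasPrefix m₂ y) →
        a (cat m₂ zeroSeq)
          = (alphaWord α₀ α₁ m₂).symm (alphaWord α₀ α₁ m₁ (a (cat m₁ zeroSeq))) := by
      intro m₁ m₂ hd hU1 hU2
      have hfix : ∀ y ∈ ⋃ w ∈ P, cyl w, swapHomeo m₁ m₂ hd y = y := by
        intro y hy
        rw [swapHomeo_apply, swapFun_id (hU1 y hy) (hU2 y hy)]
      have hvv : ∀ z, (swapHomeo m₁ m₂ hd) (cat m₁ z) = cat m₂ z := by
        intro z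
        rw [swapHomeo_apply]
        exact swapFun_left m₁ m₂ z
      have h := hrel _ (memV_swap hd) hfix (cat m₁ zeroSeq)
      rw [hvv zeroSeq, tau_spec α₀ α₁ (hasPrefix_cat m₁ zeroSeq) hvv] at h
      exact h
    have hfixout : ∀ (s : List Bool) (y : Cantor), y ∈ (⋃ w ∈ P, cyl w) →
        ¬ hasPrefix (u ++ s) y := fun s y hy h => huU y (happ s y h) hy
    have haval : ∀ (s : List Bool) (z : Cantor), a (cat (u ++ s) z) = a x₀ :=
      fun s z => huconst _ (happ s _ (hasPrefix_cat _ z))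
    have R1 := relswap (u ++ [false]) (u ++ [true]) hd1 (hfixout [false]) (hfixout [true])
    have R2 := relswap (u ++ [false, false]) (u ++ [true]) hd2
      (hfixout [false, false]) (hfixout [true])
    rw [haval, haval] at R1
    rw [haval, haval] at R2
    have E1 : α₁ (alphaWord α₀ α₁ u (a x₀)) = α₀ (alphaWord α₀ α₁ u (a x₀)) := by
      have h' := congrArg (alphaWord α₀ α₁ (u ++ [true])) R1
      rw [MulEquiv.apply_symm_apply] at h'
      rw [alphaWord_apply_append, alphaWord_apply_append] at h'
      simpa using h'
    have E2 : α₁ (alphaWord α₀ α₁ u (a x₀)) = α₀ (α₀ (alphaWord α₀ α₁ u (a x₀))) := by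
      have h' := congrArg (alphaWord α₀ α₁ (u ++ [true])) R2
      rw [MulEquiv.apply_symm_apply] at h'
      rw [alphaWord_apply_append, alphaWord_apply_append] at h'
      simpa using h'
    have E0 : α₀ (alphaWord α₀ α₁ u (a x₀)) = alphaWord α₀ α₁ u (a x₀) :=
      (α₀.injective (E1.symm.trans E2)).symm
    have E1' : α₁ (alphaWord α₀ α₁ u (a x₀)) = alphaWord α₀ α₁ u (a x₀) := E1.trans E0
    have hdc : alphaWord α₀ α₁ u (a x₀) = a x₀ :=
      (alphaWord α₀ α₁ u).injective (alphaWord_fix α₀ α₁ E0 E1' u)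
    have hc0 : α₀ (a x₀) = a x₀ := by rw [← hdc]; exact E0
    have hc1 : α₁ (a x₀) = a x₀ := by rw [← hdc]; exact E1'
    refine ⟨a x₀, hc0, hc1, ?_⟩
    intro x hx
    by_cases hux : hasPrefix u x
    · exact huconst x hux
    obtain ⟨u', hlen', hux', hu'U, hu'const⟩ := key x hx (u.length + 1)
    have hd' : Disj u' u := by
      intro y h1 h2
      exact hux (hasPrefix_trans h2 h1 (by omega) hux')
    have R3 := relswap u' u hd' (fun y hy h => hu'U y h hy) (fun y hy h => huU y h hy)
    rw [huconst _ (hasPrefix_cat u zeroSeq), hu'const _ (hasPrefix_cat u' zeroSeq)] at R3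
    have h4 := congrArg (alphaWord α₀ α₁ u) R3
    rw [MulEquiv.apply_symm_apply] at h4
    have h5 : alphaWord α₀ α₁ u (a x₀) = a x₀ := alphaWord_fix α₀ α₁ hc0 hc1 u
    have h6 : alphaWord α₀ α₁ u' (a x₀) = a x₀ := alphaWord_fix α₀ α₁ hc0 hc1 u'
    exact (alphaWord α₀ α₁ u').injective (by rw [h6, ← h4]; exact h5)
  · -- backward direction
    rintro ⟨hLC, g, hg0, hg1, hconst⟩
    refine ⟨hLC, ?_⟩
    intro v hv hfix
    rw [commute_iff]
    intro x
    by_cases hx : x ∈ ⋃ w ∈ P, cyl w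
    · obtain ⟨m, w, y, hxy, hvm⟩ := hv x
      have hmx : hasPrefix m x := by rw [hxy]; exact hasPrefix_cat m y
      obtain ⟨w₀, hw₀P, hw₀x⟩ := Set.mem_iUnion₂.mp hx
      have hw₀x' : hasPrefix w₀ x := mem_cyl_iff.mp hw₀x
      have hmt : m.length ≤ (pref x (max m.length w₀.length)).length := by
        rw [length_pref]; exact le_max_left _ _
      have hw₀t : w₀.length ≤ (pref x (max m.length w₀.length)).length := by
        rw [length_pref]; exact le_max_right _ _
      have htx : hasPrefix (pref x (max m.length w₀.length)) x := hasPrefix_pref x _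
      have hfixt : ∀ z, v (cat (pref x (max m.length w₀.length)) z)
          = cat (pref x (max m.length w₀.length)) z := by
        intro z
        apply hfix
        exact Set.mem_iUnion₂.mpr ⟨w₀, hw₀P, mem_cyl_iff.mpr
          (hasPrefix_trans hw₀x' htx hw₀t (hasPrefix_cat _ z))⟩
      have hts : pref x (max m.length w₀.length)
          = m ++ (pref x (max m.length w₀.length)).drop m.length :=
        eq_append_drop hmx htx hmt
      have hcatall : ∀ z, cat (pref x (max m.length w₀.length)) z
          = cat (w ++ (pref x (max m.length w₀.length)).drop m.length) z := by
        intro z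
        rw [← hfixt z]
        conv_lhs => rw [hts, ← cat_cat]
        rw [hvm, cat_cat]
      have hmw : m = w := by
        apply List.append_cancel_right (bs := (pref x (max m.length w₀.length)).drop m.length)
        rw [← hts]
        exact cat_inj hcatall
      rw [hfix x hx, tau_spec α₀ α₁ hmx hvm, hmw, MulEquiv.symm_apply_apply]
    · have hvx : v x ∉ ⋃ w ∈ P, cyl w := by
        intro hmem
        have h1 := hfix (v x) hmem
        have h2 : v x = x := v.injective h1
        rw [h2] at hmem
        exact hx hmem
      obtain ⟨m, w, y, hxy, hvm⟩ := hv x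
      have hmx : hasPrefix m x := by rw [hxy]; exact hasPrefix_cat m y
      rw [hconst x hx, hconst (v x) hvx, tau_spec α₀ α₁ hmx hvm,
        alphaWord_fix α₀ α₁ hg0 hg1 m, alphaWord_symm_fix α₀ α₁ hg0 hg1 w]
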